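/- Let n ≥ 1 and let H : ℝⁿ → ℝ be convex with H(0) = 0 and H(p) ≥ |p|² for all p ∈ ℝⁿ. Define α(p) := inf_{λ>0} (1 + H(λp))/λ. Then α is convex on ℝⁿ, α(0) = 0, α(sp) = s·α(p) for all s > 0 and all p ∈ ℝⁿ, and α(p) ≥ 2|p| for all p ∈ ℝⁿ. -/

import Mathlib

/-- The effective burning velocity associated with an effective Hamiltonian `H`:
`α(p) = inf_{λ > 0} (1 + H(λ p)) / λ`. -/
noncomputable def effAlpha {n : ℕ} (H : EuclideanSpace ℝ (Fin n) → ℝ)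
    (p : EuclideanSpace ℝ (Fin n)) : ℝ :=
  sInf {y : ℝ | ∃ l : ℝ, 0 < l ∧ (1 + H (l • p)) / l = y}

/-- If `H : ℝⁿ → ℝ` is convex with `H(0) = 0` and `H(p) ≥ |p|²`, then
`α(p) := inf_{λ>0}(1 + H(λp))/λ` is convex, vanishes at `0`, is positively homogeneous
of degree one, and satisfies `α(p) ≥ 2|p|`. -/
theorem statement3 {n : ℕ} (hn : 1 ≤ n) (H : EuclideanSpace ℝ (Fin n) → ℝ)
    (hconv : ConvexOn ℝ Set.univ H) (h0 : H 0 = 0)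
    (hgrow : ∀ p, H p ≥ ‖p‖ ^ 2) :
    ConvexOn ℝ Set.univ (effAlpha H) ∧ effAlpha H 0 = 0 ∧
      (∀ s : ℝ, 0 < s → ∀ p, effAlpha H (s • p) = s * effAlpha H p) ∧
      (∀ p, effAlpha H p ≥ 2 * ‖p‖) := by
  classical
  set α := effAlpha H with hαdef
  have hlb : ∀ (p : EuclideanSpace ℝ (Fin n)),
      ∀ y ∈ {y : ℝ | ∃ l : ℝ, 0 < l ∧ (1 + H (l • p)) / l = y}, 2 * ‖p‖ ≤ y := by
    rintro p y ⟨l, hl, rfl⟩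
    have h1 := hgrow (l • p)
    have h2 : ‖l • p‖ = l * ‖p‖ := by
      rw [norm_smul, Real.norm_eq_abs, abs_of_pos hl]
    rw [h2, ge_iff_le] at h1
    rw [le_div_iff₀ hl]
    nlinarith [norm_nonneg p, sq_nonneg (l * ‖p‖ - 1)]
  have hbdd : ∀ p, BddBelow {y : ℝ | ∃ l : ℝ, 0 < l ∧ (1 + H (l • p)) / l = y} :=
    fun p => ⟨2 * ‖p‖, hlb p⟩
  have hne : ∀ (p : EuclideanSpace ℝ (Fin n)),
      ({y : ℝ | ∃ l : ℝ, 0 < l ∧ (1 + H (l • p)) / l = y}).Nonempty :=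
    fun p => ⟨(1 + H ((1 : ℝ) • p)) / 1, 1, one_pos, rfl⟩
  have hge : ∀ p, 2 * ‖p‖ ≤ α p := fun p => le_csInf (hne p) (hlb p)
  have hle : ∀ p (l : ℝ), 0 < l → α p ≤ (1 + H (l • p)) / l :=
    fun p l hl => csInf_le (hbdd p) ⟨l, hl, rfl⟩
  -- α 0 = 0
  have h00 : α 0 = 0 := by
    have h1 : 0 ≤ α 0 := by simpa using hge 0
    have h2 : ∀ ε : ℝ, 0 < ε → α 0 ≤ ε := by
      intro ε hε
      have h3 := hle 0 (1 / ε) (by positivity)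
      have h4 : (1 + H ((1 / ε) • (0 : EuclideanSpace ℝ (Fin n)))) / (1 / ε) = ε := by
        rw [smul_zero, h0]
        field_simp
        norm_num
      rw [h4] at h3
      exact h3
    by_contra hc
    have hpos : 0 < α 0 := lt_of_le_of_ne h1 (Ne.symm hc)
    have := h2 (α 0 / 2) (by linarith)
    linarith
  -- one-sided homogeneity
  have hhom_le : ∀ s : ℝ, 0 < s → ∀ p, α (s • p) ≤ s * α p := by
    intro s hs p
    have key : ∀ y ∈ {y : ℝ | ∃ l : ℝ, 0 < l ∧ (1 + H (l • p)) / l = y},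
        α (s • p) / s ≤ y := by
      rintro y ⟨l, hl, rfl⟩
      have h1 : α (s • p) ≤ (1 + H ((l / s) • (s • p))) / (l / s) :=
        hle _ _ (by positivity)
      have h2 : (l / s) • (s • p) = l • p := by
        rw [smul_smul, div_mul_cancel₀ _ hs.ne']
      have h3 : (1 + H (l • p)) / (l / s) = (1 + H (l • p)) / l * s := by
        field_simp
      rw [h2, h3] at h1
      rw [div_le_iff₀ hs]
      exact h1
    have h4 := le_csInf (hne p) key
    rw [div_le_iff₀ hs] at h4
    have h4' : α (s • p) ≤ α p * s := h4
    rw [mul_comm] at h4'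
    exact h4'
  have hhom : ∀ s : ℝ, 0 < s → ∀ p, α (s • p) = s * α p := by
    intro s hs p
    refine le_antisymm (hhom_le s hs p) ?_
    have h1 := hhom_le (1 / s) (by positivity) (s • p)
    rw [smul_smul, one_div_mul_cancel hs.ne', one_smul] at h1
    have h2 := mul_le_mul_of_nonneg_left h1 hs.le
    calc s * α p ≤ s * (1 / s * α (s • p)) := h2
      _ = α (s • p) := by field_simp
  -- subadditivity
  have hsub : ∀ x y, α (x + y) ≤ α x + α y := by
    intro x y
    rw [← sub_le_iff_le_add]
    refine le_csInf (hne x) ?_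
    rintro a ⟨l, hl, rfl⟩
    rw [sub_le_iff_le_add, ← sub_le_iff_le_add']
    refine le_csInf (hne y) ?_
    rintro b ⟨m, hm, rfl⟩
    rw [sub_le_iff_le_add]
    set ν := l * m / (l + m) with hν
    have hlm : (0 : ℝ) < l + m := by positivity
    have hνpos : 0 < ν := by positivity
    have ht : ν / l + ν / m = 1 := by
      rw [hν]; field_simp; ring
    have hpt : ν • (x + y) = (ν / l) • (l • x) + (ν / m) • (m • y) := by
      rw [smul_add, smul_smul, smul_smul, div_mul_cancel₀ _ hl.ne', div_mul_cancel₀ _ hm.ne']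
    have hc := hconv.2 (Set.mem_univ (l • x)) (Set.mem_univ (m • y))
      (le_of_lt (by positivity : (0 : ℝ) < ν / l))
      (le_of_lt (by positivity : (0 : ℝ) < ν / m)) ht
    rw [← hpt] at hc
    have h1 := hle (x + y) ν hνpos
    have hfin : (1 + H (ν • (x + y))) / ν ≤ (1 + H (m • y)) / m + (1 + H (l • x)) / l := by
      rw [div_le_iff₀ hνpos]
      have e1 : ν / l = m / (l + m) := by rw [hν]; field_simp
      have e2 : ν / m = l / (l + m) := by rw [hν]; field_simp
      rw [e1, e2] at hc
      have hc' : (l + m) * H (ν • (x + y)) ≤ m * H (l • x) + l * H (m • y) := by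
        have := mul_le_mul_of_nonneg_left hc hlm.le
        calc (l + m) * H (ν • (x + y)) ≤ (l + m) * (m / (l + m) * H (l • x) + l / (l + m) * H (m • y)) := this
          _ = m * H (l • x) + l * H (m • y) := by field_simp
      have hexp : ((1 + H (m • y)) / m + (1 + H (l • x)) / l) * ν
          = (m * (1 + H (l • x)) + l * (1 + H (m • y))) / (l + m) := by
        rw [hν]; field_simp; ring
      rw [hexp, le_div_iff₀ hlm]
      nlinarith [hc']
    exact le_trans h1 hfin
  -- convexity
  have hconvα : ConvexOn ℝ Set.univ α := by
    refine ⟨convex_univ, ?_⟩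
    rintro x - y - t s ht hs hts
    rcases eq_or_lt_of_le ht with h | h
    · have hs1 : s = 1 := by linarith
      simp [← h, hs1]
    rcases eq_or_lt_of_le hs with h' | h'
    · have ht1 : t = 1 := by linarith
      simp [← h', ht1]
    calc α (t • x + s • y) ≤ α (t • x) + α (s • y) := hsub _ _
      _ = t * α x + s * α y := by rw [hhom t h x, hhom s h' y]
  exact ⟨hconvα, h00, hhom, fun p => hge p⟩
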